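/- Let (R, m) be a Noetherian local ring and M a submodule of an R-module L with m·M ≠ 0. Then m·M is a Burch submodule of L, i.e., m·((m·M) :_L m) ≠ m·(m·M). -/
import Mathlib


open IsLocalRing

/-- The colon submodule `(N :_L I) = {v ∈ L : I • v ⊆ N}`. -/
def colonSub {R L : Type*} [CommRing R] [AddCommGroup L] [Module R L]
    (N : Submodule R L) (I : Ideal R) : Submodule R L where
  carrier := {v | ∀ r ∈ I, r • v ∈ N}
  add_mem' := by
    intro a b ha hb r hr
    rw [smul_add]
    exact N.add_mem (ha r hr) (hb r hr)
  zero_mem' := by intro r hr; simp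
  smul_mem' := by
    intro c v hv r hr
    rw [smul_comm]
    exact N.smul_mem c (hv r hr)

/-- A submodule `N` of an `R`-module `L` over a local ring `(R, 𝔪)` is Burch if
`𝔪 • (N :_L 𝔪) ≠ 𝔪 • N`. -/
def IsBurchSubmodule {R L : Type*} [CommRing R] [IsLocalRing R]
    [AddCommGroup L] [Module R L] (N : Submodule R L) : Prop :=
  maximalIdeal R • colonSub N (maximalIdeal R) ≠ maximalIdeal R • N

/-- Let `(R, 𝔪)` be a Noetherian local ring and `M` a submodule of a finitely generated
`R`-module `L` with `𝔪 • M ≠ 0`.  Then `𝔪 • M` is a Burch submodule of `L`. -/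
theorem isBurchSubmodule_smul_maximalIdeal {R L : Type*} [CommRing R] [IsLocalRing R]
    [IsNoetherianRing R] [AddCommGroup L] [Module R L] [Module.Finite R L]
    (M : Submodule R L) (hM : maximalIdeal R • M ≠ ⊥) :
    IsBurchSubmodule (maximalIdeal R • M) := by
  intro h
  have hMcol : M ≤ colonSub (maximalIdeal R • M) (maximalIdeal R) := by
    intro x hx r hr
    exact Submodule.smul_mem_smul hr hx
  have h1 : maximalIdeal R • M ≤ maximalIdeal R • (maximalIdeal R • M) := by
    calc maximalIdeal R • M ≤ maximalIdeal R • colonSub (maximalIdeal R • M) (maximalIdeal R) :=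
          smul_mono_right _ hMcol
      _ = maximalIdeal R • (maximalIdeal R • M) := h
  have hfg : (maximalIdeal R • M).FG :=
    IsNoetherian.noetherian _
  exact hM (Submodule.eq_bot_of_le_smul_of_le_jacobson_bot (maximalIdeal R) _ hfg h1
    (IsLocalRing.maximalIdeal_le_jacobson ⊥))
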